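/- Let a_0,…,a_n be positive integers with gcd(a_0,…,a_n) = 1, let g := gcd(a_0,…,a_k) for some 0 ≤ k < n, and let G be a positive integer coprime to g. Then F(a_0,…,a_n) ≤ F^g(a_0,…,a_k) + F^G(a_{k+1},…,a_n,g) + gG. -/
import Mathlib


open Finset

/-- The amplitude `δ` of the (sub)pair given by the degrees `d` indexed by `D`
and the weights `a` indexed by `A`. -/
def deltaOn {ι κ : Type*} (D : Finset ι) (d : ι → ℕ) (A : Finset κ) (a : κ → ℕ) : ℤ :=
  (∑ j ∈ D, (d j : ℤ)) - ∑ i ∈ A, (a i : ℤ)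

/-- The amplitude of a full pair `(d;a)`. -/
def deltaPair {ι κ : Type*} [Fintype ι] [Fintype κ] (d : ι → ℕ) (a : κ → ℕ) : ℤ :=
  deltaOn univ d univ a

/-- `h`-regularity of the (sub)pair given by the degrees `d` indexed by `D` and the
weights `a` indexed by `A`: for every nonempty subset `I ⊆ A` of the weight indices with
`a_I := gcd_{i ∈ I} a i > 1`, either there are `|I|` pairwise distinct degree indices
`p ∈ D` with `a_I ∣ d p`, or `a_I ∣ h`. -/
def IsHRegularOn {ι κ : Type*} (h : ℕ) (D : Finset ι) (d : ι → ℕ)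
    (A : Finset κ) (a : κ → ℕ) : Prop :=
  ∀ I : Finset κ, I ⊆ A → I.Nonempty → 1 < I.gcd a →
    (∃ P : Finset ι, P ⊆ D ∧ P.card = I.card ∧ ∀ j ∈ P, I.gcd a ∣ d j) ∨ I.gcd a ∣ h

/-- `h`-regularity of a full pair `(d;a)`. -/
def IsHRegularPair {ι κ : Type*} [Fintype ι] [Fintype κ] (h : ℕ) (d : ι → ℕ)
    (a : κ → ℕ) : Prop :=
  IsHRegularOn h univ d univ a

/-- The generalised `1/h`-Frobenius number `F^h` of the weights indexed by `A`.
Letting `g` be the gcd of the weights, this is the largest integer `z` divisible by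
`lcm g h` that is not a nonnegative integral combination of the weights; this agrees
with the renormalised definition `F^h = g * F^{h / gcd (g,h)} (a/g)`.  For `g = 1`
it is the largest multiple of `h` that is not a nonnegative integral combination of
the weights (so it equals `-h` if every positive multiple of `h` is such a combination),
and `frobOn 1 A a` is the ordinary Frobenius number `F` (so `F = -1` if some weight
equals `1`). -/
noncomputable def frobOn {κ : Type*} (h : ℕ) (A : Finset κ) (a : κ → ℕ) : ℤ :=
  sSup {z : ℤ | ((Nat.lcm (A.gcd a) h : ℕ) : ℤ) ∣ z ∧
    ¬ ∃ x : κ → ℕ, ((∑ i ∈ A, x i * a i : ℕ) : ℤ) = z}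

/-- The generalised `1/h`-Frobenius number `F^h` of a full tuple of weights. -/
noncomputable def frobNum {κ : Type*} [Fintype κ] (h : ℕ) (a : κ → ℕ) : ℤ :=
  frobOn h univ a

lemma exists_bezout {κ : Type*} (A : Finset κ) (a : κ → ℕ) :
    ∃ c : κ → ℤ, ∑ i ∈ A, c i * (a i : ℤ) = ((A.gcd a : ℕ) : ℤ) := by
  classical
  induction A using Finset.cons_induction with
  | empty => exact ⟨0, by simp⟩
  | cons i s hi ih =>
    obtain ⟨c, hc⟩ := ih
    refine ⟨fun j => if j = i then Nat.gcdA (a i) (s.gcd a)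
      else Nat.gcdB (a i) (s.gcd a) * c j, ?_⟩
    rw [Finset.sum_cons, Finset.cons_eq_insert, Finset.gcd_insert]
    have h1 : ∑ j ∈ s, (if j = i then Nat.gcdA (a i) (s.gcd a)
        else Nat.gcdB (a i) (s.gcd a) * c j) * (a j : ℤ)
        = Nat.gcdB (a i) (s.gcd a) * ∑ j ∈ s, c j * (a j : ℤ) := by
      rw [Finset.mul_sum]
      refine Finset.sum_congr rfl fun j hj => ?_
      rw [if_neg (by rintro rfl; exact hi hj)]
      ring
    rw [h1, hc]
    beta_reduce
    rw [if_pos rfl]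
    have h2 : GCDMonoid.gcd (a i) (s.gcd a) = Nat.gcd (a i) (s.gcd a) := rfl
    rw [h2, Nat.gcd_eq_gcd_ab]
    ring

lemma rep_of_big {κ : Type*} (A : Finset κ) (a : κ → ℕ) (i0 : κ)
    (hi0 : i0 ∈ A) (hpos : 0 < a i0) (z : ℤ)
    (hdvd : ((A.gcd a : ℕ) : ℤ) ∣ z)
    (hz : (a i0 : ℤ) * ∑ i ∈ A, (a i : ℤ) ≤ z) :
    ∃ x : κ → ℕ, ((∑ i ∈ A, x i * a i : ℕ) : ℤ) = z := by
  classical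
  obtain ⟨c, hc⟩ := exists_bezout A a
  obtain ⟨m, hm⟩ := hdvd
  set A0 : ℤ := (a i0 : ℤ) with hA0
  have hA0pos : 0 < A0 := by rw [hA0]; exact_mod_cast hpos
  set d : κ → ℤ := fun i => (m * c i) % A0 with hd
  have hdnn : ∀ i, 0 ≤ d i := fun i => Int.emod_nonneg _ (ne_of_gt hA0pos)
  have hdlt : ∀ i, d i < A0 := fun i => Int.emod_lt_of_pos _ hA0pos
  set s : ℤ := ∑ i ∈ A, d i * (a i : ℤ) with hs
  have hsum_nn : (0:ℤ) ≤ ∑ i ∈ A, (a i : ℤ) :=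
    Finset.sum_nonneg fun i _ => by positivity
  have hsle : s ≤ (A0 - 1) * ∑ i ∈ A, (a i : ℤ) := by
    rw [hs, Finset.mul_sum]
    refine Finset.sum_le_sum fun i hi => ?_
    have h3 : d i ≤ A0 - 1 := by linarith [hdlt i]
    exact mul_le_mul_of_nonneg_right h3 (by positivity)
  have hzs : s ≤ z := by nlinarith
  have hAdvd : A0 ∣ z - s := by
    have h1 : ∀ i ∈ A, A0 ∣ (m * c i - d i) * (a i : ℤ) := fun i _ =>
      Dvd.dvd.mul_right (Int.dvd_self_sub_of_emod_eq rfl) _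
    have h2 : A0 ∣ ∑ i ∈ A, (m * c i - d i) * (a i : ℤ) := Finset.dvd_sum h1
    have h3 : ∑ i ∈ A, (m * c i - d i) * (a i : ℤ)
        = m * ∑ i ∈ A, c i * (a i : ℤ) - s := by
      rw [hs, Finset.mul_sum, ← Finset.sum_sub_distrib]
      exact Finset.sum_congr rfl fun i _ => by ring
    rw [h3, hc] at h2
    have hz2 : z - s = m * ((A.gcd a : ℕ) : ℤ) - s := by rw [hm]; ring
    rw [hz2]
    exact h2
  set q : ℤ := (z - s) / A0 with hq
  have hqe : A0 * q = z - s := Int.mul_ediv_cancel' hAdvd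
  have hqnn : 0 ≤ q := Int.ediv_nonneg (by linarith) hA0pos.le
  refine ⟨fun i => (d i + if i = i0 then q else 0).toNat, ?_⟩
  push_cast
  have hxi : ∀ i, (((d i + if i = i0 then q else 0).toNat : ℕ) : ℤ)
      = d i + if i = i0 then q else 0 := fun i =>
    Int.toNat_of_nonneg (by have := hdnn i; split_ifs <;> linarith)
  rw [Finset.sum_congr rfl fun i _ => by rw [hxi i]]
  have hsplit : ∑ i ∈ A, (d i + if i = i0 then q else 0) * (a i : ℤ)
      = s + ∑ i ∈ A, (if i = i0 then q * (a i : ℤ) else 0) := by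
    rw [hs, ← Finset.sum_add_distrib]
    refine Finset.sum_congr rfl fun i _ => ?_
    split_ifs <;> ring
  rw [hsplit, Finset.sum_ite_eq' A i0 (fun i => q * (a i : ℤ)), if_pos hi0]
  rw [← hA0]
  linarith [hqe]

lemma rep_of_lt {κ : Type*} (A : Finset κ) (a : κ → ℕ) (h : ℕ) (i0 : κ)
    (hi0 : i0 ∈ A) (hpos : 0 < a i0) (z : ℤ)
    (hdvd : ((Nat.lcm (A.gcd a) h : ℕ) : ℤ) ∣ z)
    (hz : frobOn h A a < z) :
    ∃ x : κ → ℕ, ((∑ i ∈ A, x i * a i : ℕ) : ℤ) = z := by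
  by_contra hrep
  have hgl : ((A.gcd a : ℕ) : ℤ) ∣ ((Nat.lcm (A.gcd a) h : ℕ) : ℤ) := by
    exact_mod_cast Nat.dvd_lcm_left _ _
  have hub : ∀ w ∈ {w : ℤ | ((Nat.lcm (A.gcd a) h : ℕ) : ℤ) ∣ w ∧
      ¬ ∃ x : κ → ℕ, ((∑ i ∈ A, x i * a i : ℕ) : ℤ) = w},
      w ≤ (a i0 : ℤ) * ∑ i ∈ A, (a i : ℤ) := by
    intro w hw
    by_contra hlt
    push_neg at hlt
    exact hw.2 (rep_of_big A a i0 hi0 hpos w (dvd_trans hgl hw.1) hlt.le)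
  have hmem : z ∈ {w : ℤ | ((Nat.lcm (A.gcd a) h : ℕ) : ℤ) ∣ w ∧
      ¬ ∃ x : κ → ℕ, ((∑ i ∈ A, x i * a i : ℕ) : ℤ) = w} := ⟨hdvd, hrep⟩
  have hle := le_csSup ⟨_, hub⟩ hmem
  rw [frobOn] at hz
  exact absurd hle (not_le.mpr hz)

/-- **Lemma (recursive bound on Frobenius numbers, with parameter `G`).**
Let `a₀,…,aₙ` be coprime positive integers, `g := gcd(a₀,…,a_k)` for some `0 ≤ k < n`,
and `G` a positive integer coprime to `g`.  Then
`F(a₀,…,aₙ) ≤ F^g(a₀,…,a_k) + F^G(a_{k+1},…,aₙ,g) + g·G`. -/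
theorem frobenius_recursive_bound_G (n k : ℕ) (hk : k < n)
    (a : Fin (n + 1) → ℕ) (ha : ∀ i, 0 < a i)
    (hcop : Finset.univ.gcd a = 1)
    (g : ℕ) (hg : g = (Finset.univ.filter (fun i : Fin (n + 1) => (i : ℕ) ≤ k)).gcd a)
    (G : ℕ) (hG : 0 < G) (hGg : Nat.Coprime G g) :
    frobNum 1 a ≤
      frobOn g (Finset.univ.filter (fun i : Fin (n + 1) => (i : ℕ) ≤ k)) a
      + frobOn G
          (insert (none : Option (Fin (n + 1)))
            ((Finset.univ.filter (fun i : Fin (n + 1) => k < (i : ℕ))).image some))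
          (fun o => o.elim g a)
      + (g : ℤ) * G := by
  classical
  set A1 : Finset (Fin (n+1)) := Finset.univ.filter (fun i => (i : ℕ) ≤ k) with hA1
  set A3 : Finset (Fin (n+1)) := Finset.univ.filter (fun i => k < (i : ℕ)) with hA3
  set f : Option (Fin (n+1)) → ℕ := fun o => o.elim g a with hf
  set A2 : Finset (Option (Fin (n+1))) := insert none (A3.image some) with hA2
  have hi0 : (0 : Fin (n+1)) ∈ A1 := by
    simp [hA1]
  have hgpos : 0 < g := by
    rw [hg]
    exact Nat.pos_of_dvd_of_pos (Finset.gcd_dvd hi0) (ha 0)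
  have hA13 : A1 ∪ A3 = Finset.univ := by
    ext i; simp [hA1, hA3]; omega
  have hgu : Nat.gcd g (A3.gcd a) = 1 := by
    have h := Finset.gcd_union (s₁ := A1) (s₂ := A3) (f := a)
    rw [hA13, hcop] at h
    rw [hg]
    exact h.symm
  have hA2gcd : A2.gcd f = 1 := by
    rw [hA2, Finset.gcd_insert, Finset.gcd_image]
    have : f ∘ some = a := rfl
    rw [this]
    exact hgu
  set F1 : ℤ := frobOn g A1 a with hF1
  set F2 : ℤ := frobOn G A2 f with hF2
  rw [frobNum, frobOn, hcop]
  refine csSup_le ⟨-1, by norm_num, ?_⟩ ?_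
  · rintro ⟨x, hx⟩
    have hnn : (0:ℤ) ≤ ((∑ i ∈ Finset.univ, x i * a i : ℕ) : ℤ) := by positivity
    omega
  rintro N ⟨-, hNrep⟩
  by_contra hlt
  push_neg at hlt
  exfalso
  apply hNrep
  clear hNrep
  -- Bezout for G and g
  set p : ℤ := Nat.gcdA G g with hp
  set q : ℤ := Nat.gcdB G g with hqdef
  have hbz : (1 : ℤ) = G * p + g * q := by
    have := Nat.gcd_eq_gcd_ab G g
    rwa [Nat.Coprime.gcd_eq_one hGg] at this
  set w0 : ℤ := N * p with hw0
  set d0 : ℤ := (g : ℤ) * G with hd0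
  have hd0pos : 0 < d0 := by positivity
  set t : ℤ := (F2 - (G : ℤ) * w0) / d0 + 1 with ht
  set v : ℤ := (G : ℤ) * w0 + d0 * t with hv
  have hmd := Int.emod_add_mul_ediv (F2 - (G : ℤ) * w0) d0
  have hrnn := Int.emod_nonneg (F2 - (G : ℤ) * w0) (ne_of_gt hd0pos)
  have hrlt := Int.emod_lt_of_pos (F2 - (G : ℤ) * w0) hd0pos
  have hv1 : F2 < v := by
    rw [hv, ht]; nlinarith [hmd, hrlt]
  have hv2 : v ≤ F2 + d0 := by
    rw [hv, ht]; nlinarith [hmd, hrnn]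
  have hvG : ((G : ℕ) : ℤ) ∣ v := ⟨w0 + (g : ℤ) * t, by rw [hv, hd0]; ring⟩
  have hgNv : ((g : ℕ) : ℤ) ∣ N - v := by
    refine ⟨N * q - (G : ℤ) * t, ?_⟩
    rw [hv, hw0, hd0]
    linear_combination N * hbz
  -- represent v by A2
  obtain ⟨x2, hx2⟩ := rep_of_lt A2 f G none (Finset.mem_insert_self _ _)
    (by exact hgpos) v (by rw [hA2gcd, Nat.lcm_one_left]; exact hvG) hv1
  have hx2' : (v : ℤ) = (x2 none : ℤ) * g + ((∑ i ∈ A3, x2 (some i) * a i : ℕ) : ℤ) := by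
    rw [← hx2, hA2, Finset.sum_insert (by simp)]
    rw [Finset.sum_image (fun i _ j _ h => Option.some_injective _ h)]
    push_cast
    rfl
  set T : ℤ := ((∑ i ∈ A3, x2 (some i) * a i : ℕ) : ℤ) with hT
  set u : ℤ := N - T with hu
  have hu1 : F1 < u := by
    have hx2nn : (0:ℤ) ≤ (x2 none : ℤ) * g := by positivity
    have : u = (N - v) + (x2 none : ℤ) * g := by rw [hu, hx2']; ring
    rw [this]
    have : (g : ℤ) * G = d0 := rfl
    linarith [hlt, hv2]
  have hu2 : ((g : ℕ) : ℤ) ∣ u := by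
    have : u = (N - v) + (x2 none : ℤ) * g := by rw [hu, hx2']; ring
    rw [this]
    exact dvd_add hgNv ⟨(x2 none : ℤ), by ring⟩
  obtain ⟨y, hy⟩ := rep_of_lt A1 a g 0 hi0 (ha 0) u
    (by rw [← hg, Nat.lcm_self]; exact hu2) hu1
  refine ⟨fun i => if (i : ℕ) ≤ k then y i else x2 (some i), ?_⟩
  have hsplit := Finset.sum_filter_add_sum_filter_not Finset.univ
    (fun i : Fin (n+1) => (i : ℕ) ≤ k)
    (fun i => (if (i : ℕ) ≤ k then y i else x2 (some i)) * a i)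
  have hnot : Finset.univ.filter (fun i : Fin (n+1) => ¬ (i : ℕ) ≤ k) = A3 := by
    ext i; simp [hA3]
  rw [hnot, ← hA1] at hsplit
  have e1 : ∑ i ∈ A1, (if (i : ℕ) ≤ k then y i else x2 (some i)) * a i
      = ∑ i ∈ A1, y i * a i := by
    refine Finset.sum_congr rfl fun i hi => ?_
    rw [if_pos (by simpa [hA1] using hi)]
  have e2 : ∑ i ∈ A3, (if (i : ℕ) ≤ k then y i else x2 (some i)) * a i
      = ∑ i ∈ A3, x2 (some i) * a i := by
    refine Finset.sum_congr rfl fun i hi => ?_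
    rw [if_neg (by have := Finset.mem_filter.mp hi; omega)]
  rw [← hsplit, e1, e2]
  push_cast
  push_cast at hy hT
  rw [hy, ← hT]
  rw [hu]
  ring
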